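/- Let K₁ = ⟨V, M⟩ and K₂ = ⟨V, C, E, T⟩ as subgroups of Sym(Ω). Then K₁ ∩ K₂ = ⟨V, C, T⟩. -/

import Mathlib

open Equiv

/-! Context: `q = 3^r`, `K = F_q` a finite field with `3^r` elements, `Ω = K × K × K`,
`ε = 3^(r-1)` (so `q = 3ε`).  Permutations of `Ω` are composed left to right in the paper;
in Lean, `(g * h) x = g (h x)`, so the paper's product `g·h` corresponds to `h * g` here,
and the paper's conjugate `g⁻¹ x g` corresponds to `g * x * g⁻¹`. -/

/-- The permutation `α_{(u,v,w)} : (a,b,c) ↦ (a+u, b+v, c+w)` of `Ω = K × K × K`. -/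
def alphaPerm {K : Type*} [Field K] (u v w : K) : Equiv.Perm (K × K × K) where
  toFun x := (x.1 + u, x.2.1 + v, x.2.2 + w)
  invFun x := (x.1 - u, x.2.1 - v, x.2.2 - w)
  left_inv x := by simp
  right_inv x := by simp

/-- The permutation `β_{λ,μ} : (a,b,c) ↦ (λa, μb, (λμ)^{2ε} c)` of `Ω = K × K × K`. -/
def betaPerm {K : Type*} [Field K] (ε : ℕ) (l m : Kˣ) : Equiv.Perm (K × K × K) where
  toFun x := ((l : K) * x.1, (m : K) * x.2.1, (((l * m) ^ (2 * ε) : Kˣ) : K) * x.2.2)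
  invFun x := ((l⁻¹ : Kˣ) * x.1, (m⁻¹ : Kˣ) * x.2.1, ((((l * m) ^ (2 * ε))⁻¹ : Kˣ) : K) * x.2.2)
  left_inv x := by simp
  right_inv x := by simp

/-- The permutation `γ_e : (a,b,c) ↦ (a+eb, b, c)` of `Ω = K × K × K`. -/
def gammaPerm {K : Type*} [Field K] (e : K) : Equiv.Perm (K × K × K) where
  toFun x := (x.1 + e * x.2.1, x.2.1, x.2.2)
  invFun x := (x.1 - e * x.2.1, x.2.1, x.2.2)
  left_inv x := by simp
  right_inv x := by simp

/-- The permutation `δ : (a,b,c) ↦ (b, -a, c)` of `Ω = K × K × K`. -/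
def deltaPerm (K : Type*) [Field K] : Equiv.Perm (K × K × K) where
  toFun x := (x.2.1, -x.1, x.2.2)
  invFun x := (-x.2.1, x.1, x.2.2)
  left_inv x := by simp
  right_inv x := by simp

/-- The permutation `τ_d : (a,b,c) ↦ (a + d·b² + d^ε·c, b, c)` of `Ω = K × K × K`. -/
def tauPerm {K : Type*} [Field K] (ε : ℕ) (d : K) : Equiv.Perm (K × K × K) where
  toFun x := (x.1 + d * x.2.1 ^ 2 + d ^ ε * x.2.2, x.2.1, x.2.2)
  invFun x := (x.1 - d * x.2.1 ^ 2 - d ^ ε * x.2.2, x.2.1, x.2.2)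
  left_inv x := by obtain ⟨a, b, c⟩ := x; simp; ring
  right_inv x := by obtain ⟨a, b, c⟩ := x; simp; ring

variable (K : Type*) [Field K]

/-- `A = ⟨α_{(u,v,w)} : u,v,w ∈ F_q⟩`. -/
def Agrp : Subgroup (Equiv.Perm (K × K × K)) :=
  Subgroup.closure {g | ∃ u v w : K, g = alphaPerm u v w}

/-- `V = ⟨α_{(u,v,0)} : u,v ∈ F_q⟩`. -/
def Vgrp : Subgroup (Equiv.Perm (K × K × K)) :=
  Subgroup.closure {g | ∃ u v : K, g = alphaPerm u v 0}

/-- `F = ⟨α_{(0,0,w)} : w ∈ F_q⟩`. -/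
def Fgrp : Subgroup (Equiv.Perm (K × K × K)) :=
  Subgroup.closure {g | ∃ w : K, g = alphaPerm 0 0 w}

/-- `Z₀ = ⟨α_{(u,0,w)} : u,w ∈ F_q⟩`. -/
def Z0grp : Subgroup (Equiv.Perm (K × K × K)) :=
  Subgroup.closure {g | ∃ u w : K, g = alphaPerm u 0 w}

/-- `Z = ⟨α_{(u,0,0)} : u ∈ F_q⟩`. -/
def Zgrp : Subgroup (Equiv.Perm (K × K × K)) :=
  Subgroup.closure {g | ∃ u : K, g = alphaPerm u 0 0}

/-- `C = ⟨γ_e : e ∈ F_q⟩`. -/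
def Cgrp : Subgroup (Equiv.Perm (K × K × K)) :=
  Subgroup.closure {g | ∃ e : K, g = gammaPerm e}

/-- `R = ⟨β_{μ,μ} : μ ∈ F_q^×⟩`. -/
def Rgrp (ε : ℕ) : Subgroup (Equiv.Perm (K × K × K)) :=
  Subgroup.closure {g | ∃ μ : Kˣ, g = betaPerm ε μ μ}

/-- `S = ⟨β_{μ²,μ} : μ ∈ F_q^×⟩`. -/
def Sgrp (ε : ℕ) : Subgroup (Equiv.Perm (K × K × K)) :=
  Subgroup.closure {g | ∃ μ : Kˣ, g = betaPerm ε (μ ^ 2) μ}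

/-- `T = ⟨β_{μ,μ⁻¹} : μ ∈ F_q^×⟩`. -/
def Tgrp (ε : ℕ) : Subgroup (Equiv.Perm (K × K × K)) :=
  Subgroup.closure {g | ∃ μ : Kˣ, g = betaPerm ε μ μ⁻¹}

/-- `D = ⟨δ⟩`. -/
def Dgrp : Subgroup (Equiv.Perm (K × K × K)) :=
  Subgroup.closure {deltaPerm K}

/-- `E = ⟨τ_d : d ∈ F_q⟩`. -/
def Egrp (ε : ℕ) : Subgroup (Equiv.Perm (K × K × K)) :=
  Subgroup.closure {g | ∃ d : K, g = tauPerm ε d}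

/-- `M = ⟨C, D, T⟩`. -/
def Mgrp (ε : ℕ) : Subgroup (Equiv.Perm (K × K × K)) :=
  Cgrp K ⊔ Dgrp K ⊔ Tgrp K ε

/-- `Q = ⟨A, C⟩`. -/
def QgrpBig : Subgroup (Equiv.Perm (K × K × K)) :=
  Agrp K ⊔ Cgrp K

/-- `P = ⟨Q, E⟩`. -/
def Pgrp (ε : ℕ) : Subgroup (Equiv.Perm (K × K × K)) :=
  QgrpBig K ⊔ Egrp K ε

/-- `K₁ = ⟨V, M⟩`. -/
def K1grp (K : Type*) [Field K] (ε : ℕ) : Subgroup (Equiv.Perm (K × K × K)) :=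
  Vgrp K ⊔ Mgrp K ε

/-- `K₂ = ⟨V, C, E, T⟩`. -/
def K2grp (K : Type*) [Field K] (ε : ℕ) : Subgroup (Equiv.Perm (K × K × K)) :=
  Vgrp K ⊔ Cgrp K ⊔ Egrp K ε ⊔ Tgrp K ε

/-- Auxiliary subgroup: affine maps on `(a,b)` with determinant-1 linear part, fixing `c`. -/
def SLaff (K : Type*) [Field K] : Subgroup (Equiv.Perm (K × K × K)) where
  carrier := {g | ∃ p q r s u v : K, p * s - q * r = 1 ∧
    ∀ x : K × K × K, g x = (p * x.1 + q * x.2.1 + u, r * x.1 + s * x.2.1 + v, x.2.2)}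
  one_mem' := ⟨1, 0, 0, 1, 0, 0, by ring, fun x => by simp⟩
  mul_mem' := by
    rintro g₁ g₂ ⟨p₁,q₁,r₁,s₁,u₁,v₁,h₁,H₁⟩ ⟨p₂,q₂,r₂,s₂,u₂,v₂,h₂,H₂⟩
    refine ⟨p₁*p₂+q₁*r₂, p₁*q₂+q₁*s₂, r₁*p₂+s₁*r₂, r₁*q₂+s₁*s₂,
      p₁*u₂+q₁*v₂+u₁, r₁*u₂+s₁*v₂+v₁,
      by linear_combination (p₂*s₂-q₂*r₂)*h₁ + h₂, ?_⟩
    intro x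
    rw [Equiv.Perm.mul_apply, H₂, H₁]
    exact Prod.ext (by ring) (Prod.ext (by ring) rfl)
  inv_mem' := by
    rintro g ⟨p,q,r,s,u,v,h,H⟩
    refine ⟨s, -q, -r, p, -(s*u) + q*v, r*u - p*v, by linear_combination h, ?_⟩
    intro x
    rw [eq_comm, Equiv.Perm.eq_inv_iff_eq, H]
    exact Prod.ext (by linear_combination (x.1 - u) * h)
      (Prod.ext (by linear_combination (x.2.1 - v) * h) rfl)

/-- Auxiliary subgroup: permutations whose second coordinate depends only on the
second coordinate of the input. -/
def Bfix (K : Type*) [Field K] [Fintype K] : Subgroup (Equiv.Perm (K × K × K)) where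
  carrier := {g | ∀ x y : K × K × K, x.2.1 = y.2.1 → (g x).2.1 = (g y).2.1}
  one_mem' := fun x y h => h
  mul_mem' := fun {a b} ha hb x y h => ha _ _ (hb x y h)
  inv_mem' := by
    intro g hg x y h
    have hsurj : Function.Surjective (fun b : K => (g (0, b, 0)).2.1) := by
      intro b'
      refine ⟨(g⁻¹ (0, b', 0)).2.1, ?_⟩
      have := hg (0, (g⁻¹ (0, b', 0)).2.1, 0) (g⁻¹ (0, b', 0)) rfl
      simpa using this
    have hinj : Function.Injective (fun b : K => (g (0, b, 0)).2.1) :=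
      Finite.injective_iff_surjective.mpr hsurj
    apply hinj
    have hx := hg (g⁻¹ x) (0, (g⁻¹ x).2.1, 0) rfl
    have hy := hg (g⁻¹ y) (0, (g⁻¹ y).2.1, 0) rfl
    simp only [show ∀ z, g (g⁻¹ z) = z from fun z => g.apply_symm_apply z] at hx hy
    simp only []
    rw [← hx, ← hy, h]

lemma K1_le_SLaff (K : Type*) [Field K] (ε : ℕ) : K1grp K ε ≤ SLaff K := by
  rw [K1grp, Mgrp]
  refine sup_le ?_ (sup_le (sup_le ?_ ?_) ?_)
  · rw [Vgrp, Subgroup.closure_le]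
    rintro g ⟨u, v, rfl⟩
    exact ⟨1, 0, 0, 1, u, v, by ring, fun x => by
      simp only [alphaPerm, Equiv.coe_fn_mk]
      exact Prod.ext (by ring) (Prod.ext (by ring) (by ring))⟩
  · rw [Cgrp, Subgroup.closure_le]
    rintro g ⟨e, rfl⟩
    exact ⟨1, e, 0, 1, 0, 0, by ring, fun x => by
      simp only [gammaPerm, Equiv.coe_fn_mk]
      exact Prod.ext (by ring) (Prod.ext (by ring) rfl)⟩
  · rw [Dgrp, Subgroup.closure_le]
    rintro g hg
    rw [Set.mem_singleton_iff] at hg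
    subst hg
    exact ⟨0, 1, -1, 0, 0, 0, by ring, fun x => by
      simp only [deltaPerm, Equiv.coe_fn_mk]
      exact Prod.ext (by ring) (Prod.ext (by ring) rfl)⟩
  · rw [Tgrp, Subgroup.closure_le]
    rintro g ⟨μ, rfl⟩
    refine ⟨(μ : K), 0, 0, ((μ⁻¹ : Kˣ) : K), 0, 0, ?_, fun x => by
      simp only [betaPerm, Equiv.coe_fn_mk, mul_inv_cancel, one_pow,
        Units.val_one, one_mul]
      exact Prod.ext (by ring) (Prod.ext (by ring) rfl)⟩
    have : (μ : K) * ((μ⁻¹ : Kˣ) : K) = 1 := by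
      rw [← Units.val_mul, mul_inv_cancel, Units.val_one]
    linear_combination this

lemma K2_le_Bfix (K : Type*) [Field K] [Fintype K] (ε : ℕ) : K2grp K ε ≤ Bfix K := by
  rw [K2grp]
  refine sup_le (sup_le (sup_le ?_ ?_) ?_) ?_
  · rw [Vgrp, Subgroup.closure_le]
    rintro g ⟨u, v, rfl⟩ x y h
    simp only [alphaPerm, Equiv.coe_fn_mk, h]
  · rw [Cgrp, Subgroup.closure_le]
    rintro g ⟨e, rfl⟩ x y h
    simpa only [gammaPerm, Equiv.coe_fn_mk] using h
  · rw [Egrp, Subgroup.closure_le]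
    rintro g ⟨d, rfl⟩ x y h
    simpa only [tauPerm, Equiv.coe_fn_mk] using h
  · rw [Tgrp, Subgroup.closure_le]
    rintro g ⟨μ, rfl⟩ x y h
    simp only [betaPerm, Equiv.coe_fn_mk, h]

/-- Lemma 3.1 (part): `K₁ ∩ K₂ = ⟨V, C, T⟩`. -/
theorem stmt14 (r : ℕ) (hr : 1 ≤ r) (K : Type*) [Field K] [Fintype K]
    (hcard : Fintype.card K = 3 ^ r) (ε : ℕ) (hε : ε = 3 ^ (r - 1)) :
    K1grp K ε ⊓ K2grp K ε = Vgrp K ⊔ Cgrp K ⊔ Tgrp K ε := by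
  apply le_antisymm
  · intro g hg
    obtain ⟨h1, h2⟩ := hg
    obtain ⟨p, q, rr, s, u, v, hdet, hform⟩ := K1_le_SLaff K ε h1
    have hS := K2_le_Bfix K ε h2
    have hr0 : rr = 0 := by
      have := hS (1, 0, 0) (0, 0, 0) rfl
      rw [hform, hform] at this
      simpa using this
    subst hr0
    have hps : p * s = 1 := by linear_combination hdet
    have hsp : s * p = 1 := by linear_combination hdet
    set pu : Kˣ := ⟨p, s, hps, hsp⟩ with hpu
    have hgeq : g = alphaPerm u v 0 * gammaPerm (q * p) * betaPerm ε pu pu⁻¹ := by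
      apply Equiv.ext
      intro x
      rw [Equiv.Perm.mul_apply, Equiv.Perm.mul_apply, hform]
      have hp : ((pu : Kˣ) : K) = p := rfl
      have hs : ((pu⁻¹ : Kˣ) : K) = s := rfl
      simp only [betaPerm, gammaPerm, alphaPerm, Equiv.coe_fn_mk, mul_inv_cancel,
        one_pow, Units.val_one, one_mul, hp, hs]
      exact Prod.ext (by linear_combination (-(q * x.2.1)) * hps)
        (Prod.ext (by ring) (by ring))
    rw [hgeq]
    have hα : alphaPerm u v (0 : K) ∈ Vgrp K ⊔ Cgrp K ⊔ Tgrp K ε :=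
      Subgroup.mem_sup_left (Subgroup.mem_sup_left (Subgroup.subset_closure ⟨u, v, rfl⟩))
    have hγ : gammaPerm (q * p) ∈ Vgrp K ⊔ Cgrp K ⊔ Tgrp K ε :=
      Subgroup.mem_sup_left (Subgroup.mem_sup_right (Subgroup.subset_closure ⟨q * p, rfl⟩))
    have hβ : betaPerm ε pu pu⁻¹ ∈ Vgrp K ⊔ Cgrp K ⊔ Tgrp K ε :=
      Subgroup.mem_sup_right (Subgroup.subset_closure ⟨pu, rfl⟩)
    exact mul_mem (mul_mem hα hγ) hβ
  · apply le_inf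
    · refine sup_le (sup_le ?_ ?_) ?_
      · exact le_sup_left
      · exact ((le_sup_left.trans le_sup_left).trans le_sup_right : Cgrp K ≤ K1grp K ε)
      · exact ((le_sup_right.trans le_sup_right) : Tgrp K ε ≤ Vgrp K ⊔ Mgrp K ε)
    · refine sup_le (sup_le ?_ ?_) ?_
      · exact (le_sup_left.trans le_sup_left).trans le_sup_left
      · exact (le_sup_right.trans le_sup_left).trans le_sup_left
      · exact le_sup_right
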